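/- The equation ε·η(ε) = 1 has exactly 6 solutions ε in the H₄ root system Δ_{H₄} = 𝕀 ∩ 𝕊³, namely ±1 and ±½(±1, 0, τ, τ−1); these 6 solutions form a cyclic group of order 6 under quaternion multiplication, generated by ½(1,0,τ,τ−1). -/

import Mathlib

open Polynomial Quaternion

noncomputable section

set_option maxRecDepth 8000
set_option synthInstance.maxHeartbeats 1000000
set_option maxHeartbeats 1000000

def f5 : ℚ[X] := X ^ 2 - C 5

instance f5_irred : Fact (Irreducible f5) := ⟨by
  unfold f5
  apply X_pow_sub_C_irreducible_of_prime Nat.prime_two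
  intro b hb
  have h5 : Irrational (Real.sqrt 5) := (Nat.prime_five).irrational_sqrt
  have hb' : ((b : ℝ)) ^ 2 = 5 := by exact_mod_cast congrArg (fun q : ℚ => (q : ℝ)) hb
  have heq : Real.sqrt 5 = |(b : ℝ)| := by
    rw [← hb', Real.sqrt_sq_eq_abs]
  rw [heq] at h5
  exact h5 ⟨|b|, by push_cast; ring⟩⟩

abbrev K : Type := AdjoinRoot f5

instance : Field K := inferInstance
instance : SMul K (Quaternion K) := inferInstance
instance : Algebra K (Quaternion K) := inferInstance

def sqrt5 : K := AdjoinRoot.root f5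

lemma sqrt5_sq : sqrt5 ^ 2 = 5 := by
  have h : AdjoinRoot.mk f5 (X ^ 2 - C 5) = 0 := AdjoinRoot.mk_self
  rw [map_sub, map_pow, AdjoinRoot.mk_X, AdjoinRoot.mk_C, sub_eq_zero] at h
  simpa [sqrt5] using h

def conjK : K →+* K :=
  AdjoinRoot.lift (algebraMap ℚ K) (-sqrt5) (by
    simp only [f5, eval₂_sub, eval₂_pow, eval₂_X, eval₂_C, sub_eq_zero]
    have h : (-sqrt5) ^ 2 = sqrt5 ^ 2 := by ring
    rw [h, sqrt5_sq]
    simp)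

def τ : K := (1 + sqrt5) / 2

abbrev ℍK := Quaternion K

def twist (x : ℍK) : ℍK := ⟨conjK x.re, conjK x.imI, conjK x.imK, conjK x.imJ⟩

def icoB : Fin 4 → ℍK :=
  ![1, ⟨0,1,0,0⟩, ⟨1/2,1/2,1/2,1/2⟩, ⟨(1-τ)/2, τ/2, 0, 1/2⟩]

def Ico : AddSubgroup ℍK :=
  AddSubgroup.closure (Set.range icoB ∪ Set.range fun i => τ • icoB i)

def lB : Fin 4 → ℍK :=
  ![1, ⟨-(1/2),1/2,1/2,1/2⟩, ⟨0,-1,0,0⟩, ⟨0,1/2,(τ-1)/2,-(τ/2)⟩]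

def LatA4 : AddSubgroup ℍK := AddSubgroup.closure (Set.range lB)

def LatATau : AddSubgroup ℍK :=
  AddSubgroup.closure (Set.range lB ∪ Set.range fun i => τ • lB i)


/-- The H₄ root system: the 120 unit icosians 𝕀 ∩ 𝕊³ (for icosians, lying on the
unit sphere is equivalent to having reduced norm 1). -/
def ΔH4 : Set ℍK := {x | x ∈ Ico ∧ normSq x = 1}

def g6 : ℍK := ⟨1/2, 0, τ/2, (τ-1)/2⟩

def g6' : ℍK := ⟨-(1/2), 0, τ/2, (τ-1)/2⟩

instance : CharZero K := charZero_of_injective_algebraMap (algebraMap ℚ K).injective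

lemma conjK_sqrt5 : conjK sqrt5 = -sqrt5 := AdjoinRoot.lift_root _

lemma sqrt5_ne_zero : sqrt5 ≠ 0 := by
  intro h
  have := sqrt5_sq
  rw [h] at this
  norm_num at this

lemma tau_ne_zero : τ ≠ 0 := by
  intro h
  rw [τ] at h
  have h5 : (5 : K) = 1 := by linear_combination (2*(sqrt5 - 1))*h - sqrt5_sq
  norm_num at h5

lemma g6_sq : g6 ^ 2 = g6' := by
  rw [sq]
  ext
  · rw [Quaternion.re_mul]
    simp only [g6, g6', τ]
    linear_combination (-1/8 : K) * sqrt5_sq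
  · rw [Quaternion.imI_mul]; simp only [g6, g6', τ]; ring
  · rw [Quaternion.imJ_mul]; simp only [g6, g6', τ]; ring
  · rw [Quaternion.imK_mul]; simp only [g6, g6', τ]; ring

lemma g6_cube : g6 ^ 3 = -1 := by
  rw [pow_succ, g6_sq]
  ext
  · rw [Quaternion.re_mul]
    simp only [g6, g6', τ, Quaternion.re_neg, Quaternion.re_one]
    linear_combination (-1/8 : K) * sqrt5_sq
  · rw [Quaternion.imI_mul]; simp only [g6, g6', τ, Quaternion.imI_neg, Quaternion.imI_one]; ring
  · rw [Quaternion.imJ_mul]; simp only [g6, g6', τ, Quaternion.imJ_neg, Quaternion.imJ_one]; ring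
  · rw [Quaternion.imK_mul]; simp only [g6, g6', τ, Quaternion.imK_neg, Quaternion.imK_one]; ring

lemma g6_pow4 : g6 ^ 4 = -g6 := by rw [pow_succ, g6_cube, neg_one_mul]
lemma g6_pow5 : g6 ^ 5 = -g6' := by
  have h : g6 ^ 5 = g6 ^ 3 * g6 ^ 2 := by rw [← pow_add]
  rw [h, g6_cube, g6_sq, neg_one_mul]
lemma g6_pow6 : g6 ^ 6 = 1 := by
  have h : g6 ^ 6 = (g6 ^ 3) ^ 2 := by rw [← pow_mul]
  rw [h, g6_cube, neg_one_sq]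

lemma g6_ne_one : g6 ≠ 1 := by
  intro h
  have := congrArg QuaternionAlgebra.re h
  simp only [g6, Quaternion.re_one] at this
  norm_num at this

lemma g6'_ne_one : g6' ≠ 1 := by
  intro h
  have := congrArg QuaternionAlgebra.re h
  simp only [g6', Quaternion.re_one] at this
  norm_num at this

lemma neg_g6_ne_one : -g6 ≠ 1 := by
  intro h
  have := congrArg QuaternionAlgebra.re h
  simp only [Quaternion.re_neg, Quaternion.re_one] at this
  simp only [g6] at this
  norm_num at this

lemma neg_g6'_ne_one : -g6' ≠ 1 := by
  intro h
  have h2 := congrArg QuaternionAlgebra.imJ h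
  simp only [Quaternion.imJ_neg, Quaternion.imJ_one] at h2
  simp only [g6', neg_eq_zero, _root_.div_eq_zero_iff] at h2
  rcases h2 with h2 | h2
  · exact tau_ne_zero h2
  · norm_num at h2

lemma orderOf_g6 : orderOf g6 = 6 := by
  rw [orderOf_eq_iff (by norm_num)]
  refine ⟨g6_pow6, ?_⟩
  intro m hm hm0
  interval_cases m
  · rw [pow_one]; exact g6_ne_one
  · rw [g6_sq]; exact g6'_ne_one
  · rw [g6_cube]
    intro h
    have := congrArg QuaternionAlgebra.re h
    simp only [Quaternion.re_neg, Quaternion.re_one] at this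
    norm_num at this
  · rw [g6_pow4]; exact neg_g6_ne_one
  · rw [g6_pow5]; exact neg_g6'_ne_one

lemma six_set_eq_powers :
    ({1, -1, g6, -g6, g6', -g6'} : Set ℍK) = {x : ℍK | ∃ n : ℕ, x = g6 ^ n} := by
  ext x
  simp only [Set.mem_insert_iff, Set.mem_singleton_iff, Set.mem_setOf_eq]
  constructor
  · rintro (rfl | rfl | rfl | rfl | rfl | rfl)
    · exact ⟨0, by rw [pow_zero]⟩
    · exact ⟨3, g6_cube.symm⟩
    · exact ⟨1, (pow_one g6).symm⟩
    · exact ⟨4, g6_pow4.symm⟩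
    · exact ⟨2, g6_sq.symm⟩
    · exact ⟨5, g6_pow5.symm⟩
  · rintro ⟨n, rfl⟩
    have hmod : g6 ^ n = g6 ^ (n % 6) := by
      conv_lhs => rw [← Nat.div_add_mod n 6]
      rw [pow_add, pow_mul, g6_pow6, one_pow, one_mul]
    rw [hmod]
    have h6 : n % 6 < 6 := Nat.mod_lt _ (by norm_num)
    interval_cases h : n % 6
    · rw [pow_zero]; tauto
    · rw [pow_one]; tauto
    · rw [g6_sq]; tauto
    · rw [g6_cube]; tauto
    · rw [g6_pow4]; tauto
    · rw [g6_pow5]; tauto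
lemma conjK_half : conjK (1/2 : K) = 1/2 := by
  rw [map_div₀, map_one, map_ofNat]

lemma conjK_tau : conjK τ = (1 - sqrt5)/2 := by
  rw [τ, map_div₀, map_add, map_one, map_ofNat, conjK_sqrt5]
  ring

lemma twist_one : twist 1 = star 1 := by
  ext <;> simp [twist]

lemma twist_neg (x : ℍK) : twist (-x) = - twist x := by
  ext <;> simp [twist] <;> rfl

lemma twist_g6 : twist g6 = star g6 := by
  ext
  · rw [Quaternion.re_star]; show conjK g6.re = g6.re
    simp only [g6]; exact conjK_half
  · show conjK g6.imI = -g6.imI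
    simp only [g6]; rw [map_zero]; ring
  · show conjK g6.imK = -g6.imJ
    simp only [g6]
    rw [map_div₀, map_sub, conjK_tau, map_one, map_ofNat, τ]
    ring
  · show conjK g6.imJ = -g6.imK
    simp only [g6]
    rw [map_div₀, conjK_tau, map_ofNat, τ]
    ring

lemma twist_g6' : twist g6' = star g6' := by
  ext
  · rw [Quaternion.re_star]; show conjK g6'.re = g6'.re
    simp only [g6']; rw [map_neg]; rw [conjK_half]
  · show conjK g6'.imI = -g6'.imI
    simp only [g6']; rw [map_zero]; ring
  · show conjK g6'.imK = -g6'.imJ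
    simp only [g6']
    rw [map_div₀, map_sub, conjK_tau, map_one, map_ofNat, τ]
    ring
  · show conjK g6'.imJ = -g6'.imK
    simp only [g6']
    rw [map_div₀, conjK_tau, map_ofNat, τ]
    ring

lemma normSq_g6 : normSq g6 = 1 := by
  rw [Quaternion.normSq_def']
  show (1/2 : K)^2 + 0^2 + (τ/2)^2 + ((τ-1)/2)^2 = 1
  rw [τ]
  linear_combination (1/8 : K) * sqrt5_sq

lemma normSq_g6' : normSq g6' = 1 := by
  rw [Quaternion.normSq_def']
  show (-(1/2) : K)^2 + 0^2 + (τ/2)^2 + ((τ-1)/2)^2 = 1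
  rw [τ]
  linear_combination (1/8 : K) * sqrt5_sq

lemma mul_twist_eq_one_of (x : ℍK) (h1 : twist x = star x) (h2 : normSq x = 1) :
    x * twist x = 1 := by
  rw [h1, Quaternion.self_mul_star, h2, Quaternion.coe_one]

-- Ico membership
lemma icoB_mem (i : Fin 4) : icoB i ∈ Ico :=
  AddSubgroup.subset_closure (Or.inl ⟨i, rfl⟩)

lemma tau_icoB_mem (i : Fin 4) : τ • icoB i ∈ Ico :=
  AddSubgroup.subset_closure (Or.inr ⟨i, rfl⟩)

lemma one_mem_Ico : (1 : ℍK) ∈ Ico := icoB_mem 0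

lemma g6_eq_comb : g6 = icoB 0 - icoB 3 - τ • icoB 0 + τ • icoB 2 := by
  ext <;> simp only [Quaternion.re_add, Quaternion.imI_add, Quaternion.imJ_add, Quaternion.imK_add, Quaternion.re_sub, Quaternion.imI_sub, Quaternion.imJ_sub, Quaternion.imK_sub, Quaternion.re_smul, Quaternion.imI_smul, Quaternion.imJ_smul, Quaternion.imK_smul] <;> simp [g6, icoB] <;> ring

lemma g6_mem_Ico : g6 ∈ Ico := by
  rw [g6_eq_comb]
  exact add_mem (sub_mem (sub_mem (icoB_mem 0) (icoB_mem 3)) (tau_icoB_mem 0)) (tau_icoB_mem 2)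

lemma g6'_eq : g6' = g6 - 1 := by
  ext <;> simp only [Quaternion.re_sub, Quaternion.imI_sub, Quaternion.imJ_sub, Quaternion.imK_sub] <;> simp [g6, g6'] <;> ring

lemma g6'_mem_Ico : g6' ∈ Ico := by
  rw [g6'_eq]; exact sub_mem g6_mem_Ico one_mem_Ico
lemma splitK (A B : ℤ) (h : (A : K) + (B : K) * sqrt5 = 0) : A = 0 ∧ B = 0 := by
  have h2 : (A : K) - (B : K) * sqrt5 = 0 := by
    have := congrArg conjK h
    simpa [map_add, map_mul, map_intCast, conjK_sqrt5, sub_eq_add_neg] using this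
  have hA : (A : K) = 0 := by linear_combination (h + h2) / 2
  have hB : (B : K) * sqrt5 = 0 := by linear_combination (h - h2) / 2
  have hA' : A = 0 := by exact_mod_cast hA
  have hB' : B = 0 := by
    rcases mul_eq_zero.1 hB with h' | h'
    · exact_mod_cast h'
    · exact absurd h' sqrt5_ne_zero
  exact ⟨hA', hB'⟩

lemma mem_Ico (x : ℍK) (hx : x ∈ Ico) :
    ∃ m k : Fin 4 → ℤ, (∑ i, m i • icoB i) + ∑ i, k i • (τ • icoB i) = x := by
  have hle : Ico ≤ ((Submodule.span ℤ (Set.range icoB)) ⊔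
      (Submodule.span ℤ (Set.range fun i => τ • icoB i))).toAddSubgroup := by
    rw [Ico, AddSubgroup.closure_le]
    rintro y (hy | hy)
    · exact Submodule.mem_sup_left (Submodule.subset_span hy)
    · exact Submodule.mem_sup_right (Submodule.subset_span hy)
  obtain ⟨y, hy, z, hz, rfl⟩ := Submodule.mem_sup.1 (hle hx)
  obtain ⟨m, rfl⟩ := (Submodule.mem_span_range_iff_exists_fun ℤ).1 hy
  obtain ⟨k, rfl⟩ := (Submodule.mem_span_range_iff_exists_fun ℤ).1 hz
  exact ⟨m, k, rfl⟩

lemma key (ε : ℍK) (hIco : ε ∈ Ico) (hn : normSq ε = 1) (heq : ε * twist ε = 1) :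
    ε = 1 ∨ ε = -1 ∨ ε = g6 ∨ ε = -g6 ∨ ε = g6' ∨ ε = -g6' := by
  obtain ⟨m, k, hmk⟩ := mem_Ico ε hIco
  -- components
  have hre : ε.re = (m 0 : K) + (m 2 : K)/2 + (m 3 : K)*(1-sqrt5)/4
      + (k 0 : K)*(1+sqrt5)/2 + (k 2 : K)*(1+sqrt5)/4 + (k 3 : K)*(1-sqrt5^2)/8 := by
    rw [← hmk]
    simp only [Fin.sum_univ_four, Quaternion.re_add, Quaternion.re_smul]
    simp [icoB, τ, zsmul_eq_mul, smul_smul]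
    ring
  have himI : ε.imI = (m 1 : K) + (m 2 : K)/2 + (m 3 : K)*(1+sqrt5)/4
      + (k 1 : K)*(1+sqrt5)/2 + (k 2 : K)*(1+sqrt5)/4 + (k 3 : K)*(1+sqrt5)^2/8 := by
    rw [← hmk]
    simp only [Fin.sum_univ_four, Quaternion.imI_add, Quaternion.imI_smul]
    simp [icoB, τ, zsmul_eq_mul, smul_smul]
    ring
  have himJ : ε.imJ = (m 2 : K)/2 + (k 2 : K)*(1+sqrt5)/4 := by
    rw [← hmk]
    simp only [Fin.sum_univ_four, Quaternion.imJ_add, Quaternion.imJ_smul]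
    simp [icoB, τ, zsmul_eq_mul, smul_smul]
    ring
  have himK : ε.imK = (m 2 : K)/2 + (m 3 : K)/2 + (k 2 : K)*(1+sqrt5)/4
      + (k 3 : K)*(1+sqrt5)/4 := by
    rw [← hmk]
    simp only [Fin.sum_univ_four, Quaternion.imK_add, Quaternion.imK_smul]
    simp [icoB, τ, zsmul_eq_mul, smul_smul]
    ring
  -- twist = star
  have h0 : star ε * ε = 1 := by
    rw [Quaternion.star_mul_self, hn, Quaternion.coe_one]
  have hts : twist ε = star ε := by
    calc twist ε = (star ε * ε) * twist ε := by rw [h0, one_mul]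
    _ = star ε * (ε * twist ε) := by rw [mul_assoc]
    _ = star ε := by rw [heq, mul_one]
  have h1 : conjK ε.re = ε.re := by
    have := congrArg QuaternionAlgebra.re hts
    rwa [Quaternion.re_star] at this
  have h2 : conjK ε.imI = -ε.imI := congrArg QuaternionAlgebra.imI hts
  have h3 : conjK ε.imK = -ε.imJ := congrArg QuaternionAlgebra.imJ hts
  rw [hre] at h1
  rw [himI] at h2
  rw [himK, himJ] at h3
  simp only [map_add, map_mul, map_intCast, map_div₀, map_sub, map_one, map_ofNat,
    map_pow, conjK_sqrt5, map_neg] at h1 h2 h3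
  -- integer linear relations
  obtain ⟨-, e1⟩ := splitK 0 (m 3 - 2 * k 0 - k 2) (by push_cast; linear_combination 2 * h1)
  obtain ⟨e2, -⟩ := splitK (4 * m 1 + 2 * m 2 + m 3 + 2 * k 1 + k 2 + 3 * k 3) 0
    (by push_cast; linear_combination 2 * h2 - ((k 3 : K)/2) * sqrt5_sq)
  obtain ⟨e3, e4⟩ := splitK (4 * m 2 + 2 * m 3 + 2 * k 2 + k 3) (-(k 3))
    (by push_cast; linear_combination 4 * h3)
  have hk3 : k 3 = 0 := by omega
  have hm3 : m 3 = 2 * k 0 + k 2 := by omega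
  have hm2 : m 2 = -(k 0) - k 2 := by omega
  have hk1 : k 1 = -(2 * m 1) := by omega
  -- cast facts
  have cm3 : ((m 3 : ℤ) : K) = 2 * (k 0 : K) + (k 2 : K) := by exact_mod_cast congrArg (Int.cast : ℤ → K) hm3
  have cm2 : ((m 2 : ℤ) : K) = -(k 0 : K) - (k 2 : K) := by exact_mod_cast congrArg (Int.cast : ℤ → K) hm2
  have ck1 : ((k 1 : ℤ) : K) = -(2 * (m 1 : K)) := by exact_mod_cast congrArg (Int.cast : ℤ → K) hk1
  have ck3 : ((k 3 : ℤ) : K) = 0 := by exact_mod_cast congrArg (Int.cast : ℤ → K) hk3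
  -- simplified components
  have hre2 : ε.re = (m 0 : K) + (k 0 : K) / 2 := by
    linear_combination hre + (1/2 : K) * cm2 + ((1 - sqrt5)/4) * cm3 + ((1 - sqrt5^2)/8) * ck3
  have himI2 : ε.imI = ((k 0 : K) + (k 2 : K) - 2 * (m 1 : K)) * sqrt5 / 2 := by
    linear_combination himI + (1/2 : K) * cm2 + ((1 + sqrt5)/4) * cm3 + ((1 + sqrt5)/2) * ck1
      + ((1 + sqrt5)^2/8) * ck3
  have himJ2 : ε.imJ = -(2 * (k 0 : K) + (k 2 : K)) / 4 + (k 2 : K) * sqrt5 / 4 := by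
    linear_combination himJ + (1/2 : K) * cm2
  have himK2 : ε.imK = (2 * (k 0 : K) + (k 2 : K)) / 4 + (k 2 : K) * sqrt5 / 4 := by
    linear_combination himK + (1/2 : K) * cm2 + (1/2 : K) * cm3 + ((1 + sqrt5)/4) * ck3
  -- norm equation
  rw [Quaternion.normSq_def', hre2, himI2, himJ2, himK2] at hn
  obtain ⟨e5, -⟩ := splitK
    (2*(2*m 0 + k 0)^2 + 10*(k 0 + k 2 - 2*m 1)^2 + (2*k 0 + k 2)^2 + 5*(k 2)^2 - 8) 0
    (by push_cast
        linear_combination 8 * hn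
          - (2*((k 0 : K) + (k 2 : K) - 2*(m 1 : K))^2 + (k 2 : K)^2) * sqrt5_sq)
  -- solve the integer equation
  have hq0 : k 0 + k 2 - 2 * m 1 = 0 := by
    have h1' : (k 0 + k 2 - 2 * m 1)^2 ≤ 0 := by
      nlinarith [sq_nonneg (2*m 0 + k 0), sq_nonneg (2*k 0 + k 2), sq_nonneg (k 2)]
    have h2' : (k 0 + k 2 - 2 * m 1)^2 = 0 := le_antisymm h1' (sq_nonneg _)
    exact pow_eq_zero_iff two_ne_zero |>.1 h2'
  -- rename to local variables for interval_cases
  obtain ⟨a, ha⟩ : ∃ a, m 0 = a := ⟨_, rfl⟩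
  obtain ⟨b, hb⟩ : ∃ b, m 1 = b := ⟨_, rfl⟩
  obtain ⟨c, hc⟩ : ∃ c, k 0 = c := ⟨_, rfl⟩
  obtain ⟨d, hd⟩ : ∃ d, k 2 = d := ⟨_, rfl⟩
  rw [ha, hc] at hre2
  rw [hb, hc, hd] at himI2
  rw [hc, hd] at himJ2 himK2
  rw [ha, hb, hc, hd] at e5
  rw [hb, hc, hd] at hq0
  -- bounds
  have bd1 : 20 * d ≤ 28 := by nlinarith [sq_nonneg (d - 2), sq_nonneg (2*a + c), sq_nonneg (2*c + d), sq_nonneg (c + d - 2*b)]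
  have bd2 : -28 ≤ 20 * d := by nlinarith [sq_nonneg (d + 2), sq_nonneg (2*a + c), sq_nonneg (2*c + d), sq_nonneg (c + d - 2*b)]
  have bc1 : 6 * (2*c + d) ≤ 17 := by nlinarith [sq_nonneg (2*c + d - 3), sq_nonneg (2*a + c), sq_nonneg (c + d - 2*b), sq_nonneg d]
  have bc2 : -17 ≤ 6 * (2*c + d) := by nlinarith [sq_nonneg (2*c + d + 3), sq_nonneg (2*a + c), sq_nonneg (c + d - 2*b), sq_nonneg d]
  have ba1 : 4 * (2*a + c) ≤ 8 := by nlinarith [sq_nonneg (2*a + c - 2), sq_nonneg (2*c + d), sq_nonneg (c + d - 2*b), sq_nonneg d]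
  have ba2 : -8 ≤ 4 * (2*a + c) := by nlinarith [sq_nonneg (2*a + c + 2), sq_nonneg (2*c + d), sq_nonneg (c + d - 2*b), sq_nonneg d]
  have hd1 : -1 ≤ d := by omega
  have hd2 : d ≤ 1 := by omega
  have hc1 : -1 ≤ c := by omega
  have hc2 : c ≤ 1 := by omega
  have ha1 : -1 ≤ a := by omega
  have ha2 : a ≤ 1 := by omega
  have hb1 : -1 ≤ b := by omega
  have hb2 : b ≤ 1 := by omega
  have hsol : (a = 1 ∧ b = 0 ∧ c = 0 ∧ d = 0) ∨ (a = -1 ∧ b = 0 ∧ c = 0 ∧ d = 0) ∨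
      (a = 1 ∧ b = 0 ∧ c = -1 ∧ d = 1) ∨ (a = -1 ∧ b = 0 ∧ c = 1 ∧ d = -1) ∨
      (a = 0 ∧ b = 0 ∧ c = -1 ∧ d = 1) ∨ (a = 0 ∧ b = 0 ∧ c = 1 ∧ d = -1) := by
    interval_cases a <;> interval_cases b <;> interval_cases c <;> interval_cases d <;>
      revert e5 <;> norm_num
  rcases hsol with ⟨h1', h2', h3', h4'⟩ | ⟨h1', h2', h3', h4'⟩ | ⟨h1', h2', h3', h4'⟩ |
    ⟨h1', h2', h3', h4'⟩ | ⟨h1', h2', h3', h4'⟩ | ⟨h1', h2', h3', h4'⟩ <;>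
    subst h1' <;> subst h2' <;> subst h3' <;> subst h4' <;>
    push_cast at hre2 himI2 himJ2 himK2
  · left
    ext
    · rw [hre2, Quaternion.re_one]; ring
    · rw [himI2, Quaternion.imI_one]; ring
    · rw [himJ2, Quaternion.imJ_one]; ring
    · rw [himK2, Quaternion.imK_one]; ring
  · right; left
    ext
    · rw [hre2, Quaternion.re_neg, Quaternion.re_one]; ring
    · rw [himI2, Quaternion.imI_neg, Quaternion.imI_one]; ring
    · rw [himJ2, Quaternion.imJ_neg, Quaternion.imJ_one]; ring
    · rw [himK2, Quaternion.imK_neg, Quaternion.imK_one]; ring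
  · right; right; left
    ext
    · rw [hre2]; show (1 : K) + (-1 : K)/2 = (1/2 : K); ring
    · rw [himI2]; show ((-1 : K) + 1 - 2*0) * sqrt5 / 2 = (0 : K); ring
    · rw [himJ2]; show -(2*(-1 : K) + 1)/4 + (1 : K)*sqrt5/4 = τ/2; rw [τ]; ring
    · rw [himK2]; show (2*(-1 : K) + 1)/4 + (1 : K)*sqrt5/4 = (τ - 1)/2; rw [τ]; ring
  · right; right; right; left
    ext
    · rw [hre2, Quaternion.re_neg]; show (-1 : K) + (1 : K)/2 = -(1/2 : K); ring
    · rw [himI2, Quaternion.imI_neg]; show ((1 : K) + -1 - 2*0) * sqrt5 / 2 = -(0 : K); ring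
    · rw [himJ2, Quaternion.imJ_neg]; show -(2*(1 : K) + -1)/4 + (-1 : K)*sqrt5/4 = -(τ/2); rw [τ]; ring
    · rw [himK2, Quaternion.imK_neg]; show (2*(1 : K) + -1)/4 + (-1 : K)*sqrt5/4 = -((τ - 1)/2); rw [τ]; ring
  · right; right; right; right; left
    ext
    · rw [hre2]; show (0 : K) + (-1 : K)/2 = -(1/2 : K); ring
    · rw [himI2]; show ((-1 : K) + 1 - 2*0) * sqrt5 / 2 = (0 : K); ring
    · rw [himJ2]; show -(2*(-1 : K) + 1)/4 + (1 : K)*sqrt5/4 = τ/2; rw [τ]; ring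
    · rw [himK2]; show (2*(-1 : K) + 1)/4 + (1 : K)*sqrt5/4 = (τ - 1)/2; rw [τ]; ring
  · right; right; right; right; right
    ext
    · rw [hre2, Quaternion.re_neg]; show (0 : K) + (1 : K)/2 = -(-(1/2) : K); ring
    · rw [himI2, Quaternion.imI_neg]; show ((1 : K) + -1 - 2*0) * sqrt5 / 2 = -(0 : K); ring
    · rw [himJ2, Quaternion.imJ_neg]; show -(2*(1 : K) + -1)/4 + (-1 : K)*sqrt5/4 = -(τ/2); rw [τ]; ring
    · rw [himK2, Quaternion.imK_neg]; show (2*(1 : K) + -1)/4 + (-1 : K)*sqrt5/4 = -((τ - 1)/2); rw [τ]; ring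

/-- the solutions of ε·η(ε) = 1 in Δ_{H₄} are exactly the six
elements ±1, ±½(1,0,τ,τ−1), ±½(−1,0,τ,τ−1), and they form a cyclic group of
order 6 generated by ½(1,0,τ,τ−1). -/
theorem solutions_eps_twist_eps_eq_one :
    {ε ∈ ΔH4 | ε * twist ε = 1} = ({1, -1, g6, -g6, g6', -g6'} : Set ℍK) ∧
    ({1, -1, g6, -g6, g6', -g6'} : Set ℍK) = {x : ℍK | ∃ n : ℕ, x = g6 ^ n} ∧
    orderOf g6 = 6 := by
  refine ⟨?_, six_set_eq_powers, orderOf_g6⟩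
  ext ε
  simp only [Set.mem_sep_iff, Set.mem_insert_iff, Set.mem_singleton_iff, ΔH4,
    Set.mem_setOf_eq]
  constructor
  · rintro ⟨⟨hI, hn⟩, heq⟩
    exact key ε hI hn heq
  · have n1 : normSq (1 : ℍK) = 1 := by simp
    have nn1 : normSq (-1 : ℍK) = 1 := by simp
    rintro (rfl | rfl | rfl | rfl | rfl | rfl)
    · exact ⟨⟨one_mem_Ico, n1⟩, mul_twist_eq_one_of 1 twist_one n1⟩
    · refine ⟨⟨neg_mem one_mem_Ico, nn1⟩, mul_twist_eq_one_of (-1) ?_ nn1⟩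
      rw [twist_neg, twist_one, star_neg]
    · exact ⟨⟨g6_mem_Ico, normSq_g6⟩, mul_twist_eq_one_of g6 twist_g6 normSq_g6⟩
    · refine ⟨⟨neg_mem g6_mem_Ico, by rw [Quaternion.normSq_neg]; exact normSq_g6⟩,
        mul_twist_eq_one_of (-g6) ?_ (by rw [Quaternion.normSq_neg]; exact normSq_g6)⟩
      rw [twist_neg, twist_g6, star_neg]
    · exact ⟨⟨g6'_mem_Ico, normSq_g6'⟩, mul_twist_eq_one_of g6' twist_g6' normSq_g6'⟩
    · refine ⟨⟨neg_mem g6'_mem_Ico, by rw [Quaternion.normSq_neg]; exact normSq_g6'⟩,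
        mul_twist_eq_one_of (-g6') ?_ (by rw [Quaternion.normSq_neg]; exact normSq_g6')⟩
      rw [twist_neg, twist_g6', star_neg]
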